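/- Under the inexact flexible Arnoldi relation (K + σM) Z̃_m + P_m = V_{m+1} H̄_m(σ; T_m), with V_{m+1} having orthonormal columns, ‖p_k‖₂ ≤ ε for each column of P_m, and H_m(σ; T_m) (top m×m block of H̄_m(σ; T_m)) invertible, let y^fom = H_m(σ; T_m)^{-1} β e_1 and r^fom = β v_1 − (K + σM) Z̃_m y^fom. Then ‖V_m^* r^fom‖₂ ≤ ε ‖y^fom‖₁, where V_m denotes the first m columns of V_{m+1}. -/

import Mathlib

open Matrix

noncomputable def norm2 {n : ℕ} (x : Fin n → ℂ) : ℝ :=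
  ‖(WithLp.equiv 2 (Fin n → ℂ)).symm x‖

lemma inner_eq_dot {k : ℕ} (x y : Fin k → ℂ) :
    (inner ℂ ((WithLp.equiv 2 (Fin k → ℂ)).symm x) ((WithLp.equiv 2 (Fin k → ℂ)).symm y) : ℂ)
      = star x ⬝ᵥ y := by
  simp [PiLp.inner_apply, dotProduct, mul_comm]

lemma norm2_sq {k : ℕ} (x : Fin k → ℂ) :
    (norm2 x) ^ 2 = Complex.re (star x ⬝ᵥ x) := by
  have := inner_self_eq_norm_sq (𝕜 := ℂ) ((WithLp.equiv 2 (Fin k → ℂ)).symm x)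
  rw [inner_eq_dot] at this
  rw [norm2, ← this]
  rfl

lemma contract {n m : ℕ} (W : Matrix (Fin n) (Fin m) ℂ) (hW : Wᴴ * W = 1)
    (z : Fin n → ℂ) : norm2 (Wᴴ *ᵥ z) ≤ norm2 z := by
  set u := Wᴴ *ᵥ z with hu
  have hWu : norm2 (W *ᵥ u) = norm2 u := by
    have : (norm2 (W *ᵥ u))^2 = (norm2 u)^2 := by
      rw [norm2_sq, norm2_sq, Matrix.star_mulVec, Matrix.dotProduct_mulVec,
        Matrix.vecMul_vecMul, hW, Matrix.vecMul_one]
    have h1 : 0 ≤ norm2 (W *ᵥ u) := norm_nonneg _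
    have h2 : 0 ≤ norm2 u := norm_nonneg _
    nlinarith
  have key : (norm2 u)^2 ≤ norm2 z * norm2 u := by
    have h1 : (norm2 u)^2 = Complex.re (star z ⬝ᵥ (W *ᵥ u)) := by
      rw [norm2_sq]
      congr 1
      rw [hu, Matrix.star_mulVec, Matrix.conjTranspose_conjTranspose,
        ← Matrix.dotProduct_mulVec]
    rw [h1, ← inner_eq_dot]
    calc Complex.re (inner ℂ ((WithLp.equiv 2 (Fin n → ℂ)).symm z)
          ((WithLp.equiv 2 (Fin n → ℂ)).symm (W *ᵥ u)) : ℂ)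
        ≤ ‖(inner ℂ ((WithLp.equiv 2 (Fin n → ℂ)).symm z)
            ((WithLp.equiv 2 (Fin n → ℂ)).symm (W *ᵥ u)) : ℂ)‖ := Complex.re_le_norm _
      _ ≤ ‖(WithLp.equiv 2 (Fin n → ℂ)).symm z‖ * ‖(WithLp.equiv 2 (Fin n → ℂ)).symm (W *ᵥ u)‖ :=
          norm_inner_le_norm _ _
      _ = norm2 z * norm2 u := by rw [← norm2, ← norm2, hWu]
  have h2 : 0 ≤ norm2 u := norm_nonneg _
  rcases eq_or_lt_of_le h2 with h | h
  · rw [← h]; exact norm_nonneg _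
  · exact le_of_mul_le_mul_right (by nlinarith) h

lemma norm2_mulVec_le {n m : ℕ} (P : Matrix (Fin n) (Fin m) ℂ) (y : Fin m → ℂ) (ε : ℝ)
    (hP : ∀ j : Fin m, norm2 (fun i => P i j) ≤ ε) :
    norm2 (P *ᵥ y) ≤ ε * ∑ k : Fin m, ‖y k‖ := by
  have heq : (WithLp.equiv 2 (Fin n → ℂ)).symm (P *ᵥ y)
      = ∑ k : Fin m, y k • (WithLp.equiv 2 (Fin n → ℂ)).symm (fun i => P i k) := by
    ext i
    rw [WithLp.ofLp_sum, Finset.sum_apply]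
    simp [Matrix.mulVec, dotProduct, WithLp.equiv_symm_apply, mul_comm]
  rw [norm2, heq]
  calc ‖∑ k : Fin m, y k • (WithLp.equiv 2 (Fin n → ℂ)).symm (fun i => P i k)‖
      ≤ ∑ k : Fin m, ‖y k • (WithLp.equiv 2 (Fin n → ℂ)).symm (fun i => P i k)‖ :=
        norm_sum_le _ _
    _ ≤ ∑ k : Fin m, ‖y k‖ * ε := by
        apply Finset.sum_le_sum
        intro k _
        rw [norm_smul]
        exact mul_le_mul_of_nonneg_left (hP k) (norm_nonneg _)
    _ = ε * ∑ k : Fin m, ‖y k‖ := by rw [Finset.mul_sum]; simp [mul_comm]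

theorem stmt16 {n m : ℕ} [NeZero m] (K M : Matrix (Fin n) (Fin n) ℂ) (σ : ℂ)
    (Zt P : Matrix (Fin n) (Fin m) ℂ)
    (V : Matrix (Fin n) (Fin (m + 1)) ℂ) (hV : Vᴴ * V = 1)
    (Hσ : Matrix (Fin (m + 1)) (Fin m) ℂ) (β : ℂ) (ε : ℝ) (hε : 0 ≤ ε)
    (hrel : (K + σ • M) * Zt + P = V * Hσ)
    (hP : ∀ j : Fin m, norm2 (fun i => P i j) ≤ ε)
    (hinv : IsUnit (Hσ.submatrix Fin.castSucc id))
    (yf : Fin m → ℂ)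
    (hyf : yf = (Hσ.submatrix Fin.castSucc id)⁻¹ *ᵥ (β • (Pi.single 0 1 : Fin m → ℂ))) :
    norm2 ((V.submatrix id Fin.castSucc)ᴴ *ᵥ
        ((β • fun i => V i 0) - (K + σ • M) *ᵥ (Zt *ᵥ yf))) ≤
      ε * ∑ k : Fin m, ‖yf k‖ := by
  set W := V.submatrix id Fin.castSucc with hWdef
  set Hm := Hσ.submatrix Fin.castSucc id with hHm
  -- W has orthonormal columns
  have hWo : Wᴴ * W = 1 := by
    ext i j
    have := congrFun (congrFun hV i.castSucc) j.castSucc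
    simp only [Matrix.mul_apply, Matrix.conjTranspose_apply, hWdef,
      Matrix.submatrix_apply, id_eq] at this ⊢
    rw [this, Matrix.one_apply, Matrix.one_apply]
    simp [Fin.castSucc_inj]
  -- Hm *ᵥ yf = β • e1
  have hHmy : Hm *ᵥ yf = β • (Pi.single 0 1 : Fin m → ℂ) := by
    rw [hyf, Matrix.mulVec_mulVec, Matrix.mul_nonsing_inv _
      ((Matrix.isUnit_iff_isUnit_det _).mp hinv), Matrix.one_mulVec]
  -- Wᴴ * V * Hσ vecmul = Hm vecmul
  have hWVH : ∀ x : Fin m → ℂ, Wᴴ *ᵥ ((V * Hσ) *ᵥ x) = Hm *ᵥ x := by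
    intro x
    rw [Matrix.mulVec_mulVec, ← Matrix.mul_assoc]
    have hmat : Wᴴ * V * Hσ = Hm := by
      ext i j
      simp only [Matrix.mul_apply, Matrix.conjTranspose_apply, hWdef,
      Matrix.submatrix_apply, id_eq, hHm]
      calc ∑ k, (∑ l, (starRingEnd ℂ) (V l i.castSucc) * V l k) * Hσ k j
          = ∑ k, (Vᴴ * V) i.castSucc k * Hσ k j := by
            apply Finset.sum_congr rfl; intro k _
            simp [Matrix.mul_apply, Matrix.conjTranspose_apply]
        _ = Hσ i.castSucc j := by
            rw [hV]
            simp [Matrix.one_apply]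
    rw [hmat]
  -- Wᴴ *ᵥ (β • v1) = β • e1
  have hWv1 : Wᴴ *ᵥ (β • fun i => V i 0) = β • (Pi.single 0 1 : Fin m → ℂ) := by
    rw [Matrix.mulVec_smul]
    have hcol : Wᴴ *ᵥ (fun i => V i 0) = (Pi.single 0 1 : Fin m → ℂ) := by
      funext j
      have := congrFun (congrFun hV j.castSucc) 0
      simp only [Matrix.mul_apply, Matrix.conjTranspose_apply] at this
      simp only [Matrix.mulVec, dotProduct, Matrix.conjTranspose_apply, hWdef,
        Matrix.submatrix_apply, id_eq]
      rw [this, Matrix.one_apply]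
      by_cases h : j = 0
      · subst h; simp
      · have : ¬ (j.castSucc = 0) := by
          exact Fin.castSucc_ne_zero_iff.mpr h
        simp [this, Pi.single_apply, h]
    rw [hcol]
  -- main rewriting
  have hZy : (K + σ • M) *ᵥ (Zt *ᵥ yf) = (V * Hσ) *ᵥ yf - P *ᵥ yf := by
    rw [Matrix.mulVec_mulVec, ← hrel]
    simp [Matrix.add_mulVec, Matrix.sub_mulVec]
  have hmain : Wᴴ *ᵥ ((β • fun i => V i 0) - (K + σ • M) *ᵥ (Zt *ᵥ yf))
      = Wᴴ *ᵥ (P *ᵥ yf) := by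
    rw [hZy]
    have : (β • fun i => V i 0) - ((V * Hσ) *ᵥ yf - P *ᵥ yf)
        = ((β • fun i => V i 0) - (V * Hσ) *ᵥ yf) + P *ᵥ yf := by abel
    rw [this, Matrix.mulVec_add, Matrix.mulVec_sub, hWv1, hWVH, hHmy]
    simp
  rw [hmain]
  calc norm2 (Wᴴ *ᵥ (P *ᵥ yf)) ≤ norm2 (P *ᵥ yf) := contract W hWo _
    _ ≤ ε * ∑ k : Fin m, ‖yf k‖ := norm2_mulVec_le P yf ε hP
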